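/- Suppose the noise values {L_h}_{h∈H} are independent real-valued random variables with E[L_h] = 0 and Var(L_h) = 8 d² / ε² for every h (the equal-split allocation ε_ℓ = ε/d with ε > 0), and let D be a random district (a random subset of the leaves H_d) that is independent of the family {L_h}. Then the district error E_D (a random variable through both D and the L_h) satisfies E[E_D | D] = 0 almost surely and Var(E_D) = (8 d² / ε²) · (E[Frag(D)] + E[w_root(D)²]), where w_root(D) denotes the root weight associated to D. -/

import Mathlib

open Finset MeasureTheory ProbabilityTheory

structure Hierarchy where
  Node : Type
  fintypeNode : Fintype Node
  decEqNode : DecidableEq Node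
  d : ℕ
  d_pos : 1 ≤ d
  root : Node
  level : Node → ℕ
  parent : Node → Node
  level_pos : ∀ h, 1 ≤ level h
  level_le : ∀ h, level h ≤ d
  level_root : level root = 1
  root_unique : ∀ h, level h = 1 → h = root
  parent_level : ∀ h, h ≠ root → level (parent h) + 1 = level h
  child_exists : ∀ h, level h < d → ∃ c, c ≠ root ∧ parent c = h

attribute [instance] Hierarchy.fintypeNode Hierarchy.decEqNode

namespace Hierarchy

variable (H : Hierarchy)

def children (h : H.Node) : Finset H.Node :=
  Finset.univ.filter fun c => c ≠ H.root ∧ H.parent c = h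

def levelSet (ℓ : ℕ) : Finset H.Node :=
  Finset.univ.filter fun h => H.level h = ℓ

def leaves : Finset H.Node := H.levelSet H.d

def Consistent (a : H.Node → ℝ) : Prop :=
  ∀ h, H.level h < H.d → a h = ∑ c ∈ H.children h, a c

def IsToyDown (a L α : H.Node → ℝ) : Prop :=
  α H.root = a H.root + L H.root ∧
  ∀ h, H.level h < H.d →
    (∑ c ∈ H.children h, α c) = α h ∧
    ∀ x : H.Node → ℝ, (∑ c ∈ H.children h, x c) = α h →
      (∃ c ∈ H.children h, x c ≠ α c) →
      ∑ c ∈ H.children h, (α c - (a c + L c))^2 <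
        ∑ c ∈ H.children h, (x c - (a c + L c))^2

def IsWeights (D : Finset H.Node) (w : H.Node → ℝ) : Prop :=
  (∀ h, H.level h = H.d → w h = if h ∈ D then 1 else 0) ∧
  (∀ h, H.level h < H.d → w h = (∑ c ∈ H.children h, w c) / ((H.children h).card : ℝ))

def frag (w : H.Node → ℝ) : ℝ :=
  ∑ h ∈ Finset.univ.filter (fun h => h ≠ H.root), (w h - w (H.parent h))^2

end Hierarchy

namespace Hierarchy

variable (H : Hierarchy)


lemma mem_children {c h : H.Node} : c ∈ H.children h ↔ c ≠ H.root ∧ H.parent c = h := by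
  simp [children]

lemma level_of_mem_children {c h : H.Node} (hc : c ∈ H.children h) :
    H.level c = H.level h + 1 := by
  rw [mem_children] at hc
  have := H.parent_level c hc.1
  rw [hc.2] at this; omega

lemma children_nonempty {h : H.Node} (hh : H.level h < H.d) : (H.children h).Nonempty := by
  obtain ⟨c, hc1, hc2⟩ := H.child_exists h hh
  exact ⟨c, (H.mem_children).2 ⟨hc1, hc2⟩⟩

lemma children_card_ne {h : H.Node} (hh : H.level h < H.d) :
    ((H.children h).card : ℝ) ≠ 0 := by
  have := (H.children_nonempty hh).card_pos
  positivity

/-- The canonical weights determined by a district `S`. -/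
noncomputable def wgt (S : Finset H.Node) (h : H.Node) : ℝ :=
  if H.level h = H.d then (if h ∈ S then 1 else 0)
  else (∑ c ∈ (H.children h).attach, wgt S c.1) / ((H.children h).card : ℝ)
termination_by H.d - H.level h
decreasing_by
  rename_i hd
  · have hlt : H.level h < H.d := lt_of_le_of_ne (H.level_le h) hd
    have h1 := H.level_of_mem_children c.2
    have h2 := H.level_le c.1
    omega

lemma wgt_leaf {S : Finset H.Node} {h : H.Node} (hd : H.level h = H.d) :
    H.wgt S h = if h ∈ S then 1 else 0 := by
  rw [wgt, if_pos hd]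

lemma wgt_node {S : Finset H.Node} {h : H.Node} (hd : H.level h < H.d) :
    H.wgt S h = (∑ c ∈ H.children h, H.wgt S c) / ((H.children h).card : ℝ) := by
  rw [wgt, if_neg (by omega)]
  congr 1
  exact Finset.sum_attach _ _

lemma isWeights_eq_wgt {S : Finset H.Node} {W : H.Node → ℝ} (hW : H.IsWeights S W) :
    ∀ h, W h = H.wgt S h := by
  suffices hs : ∀ n h, H.d - H.level h ≤ n → W h = H.wgt S h from
    fun h => hs H.d h (by omega)
  intro n
  induction n with
  | zero =>
    intro h hn
    have hd : H.level h = H.d := by have := H.level_le h; omega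
    rw [hW.1 h hd, H.wgt_leaf hd]
  | succ n ih =>
    intro h hn
    rcases eq_or_lt_of_le (H.level_le h) with hd | hd
    · rw [hW.1 h hd, H.wgt_leaf hd]
    · rw [hW.2 h hd, H.wgt_node hd]
      congr 1
      refine Finset.sum_congr rfl fun c hc => ih c ?_
      have := H.level_of_mem_children hc
      omega

-- deterministic part, appended to aux
variable {H : Hierarchy}

lemma toydown_child {a L α : H.Node → ℝ} (ht : H.IsToyDown a L α)
    {h : H.Node} (hh : H.level h < H.d) {c : H.Node} (hc : c ∈ H.children h) :
    α c = (a c + L c) +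
      (α h - ∑ c' ∈ H.children h, (a c' + L c')) / ((H.children h).card : ℝ) := by
  have hn : ((H.children h).card : ℝ) ≠ 0 := H.children_card_ne hh
  set T : ℝ := ∑ c' ∈ H.children h, (a c' + L c') with hT
  set t : ℝ := (α h - T) / ((H.children h).card : ℝ) with htdef
  set x : H.Node → ℝ := fun c' => (a c' + L c') + t with hx
  have hxsum : ∑ c' ∈ H.children h, x c' = α h := by
    rw [hx]
    rw [Finset.sum_add_distrib, Finset.sum_const, nsmul_eq_mul, ← hT, htdef]
    field_simp
    ring
  have hsum_α : ∑ c' ∈ H.children h, α c' = α h := (ht.2 h hh).1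
  by_contra hne
  have hex : ∃ c' ∈ H.children h, x c' ≠ α c' :=
    ⟨c, hc, fun he => hne he.symm⟩
  have hlt := (ht.2 h hh).2 x hxsum hex
  have key : ∑ c' ∈ H.children h, (x c' - (a c' + L c'))^2 ≤
      ∑ c' ∈ H.children h, (α c' - (a c' + L c'))^2 := by
    have h1 : ∀ c' ∈ H.children h,
        (α c' - (a c' + L c'))^2 = (α c' - x c')^2 + 2*t*(α c' - x c') + t^2 := by
      intro c' _
      simp only [hx]
      ring
    have h2 : ∀ c' ∈ H.children h, (x c' - (a c' + L c'))^2 = t^2 := by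
      intro c' _
      simp only [hx]; ring
    rw [Finset.sum_congr rfl h1, Finset.sum_congr rfl h2]
    rw [Finset.sum_add_distrib, Finset.sum_add_distrib, ← Finset.mul_sum,
      Finset.sum_sub_distrib, hsum_α, hxsum, sub_self, mul_zero, add_zero]
    have : 0 ≤ ∑ c' ∈ H.children h, (α c' - x c')^2 :=
      Finset.sum_nonneg fun _ _ => sq_nonneg _
    linarith
  linarith

lemma err_child {a L α : H.Node → ℝ} (ht : H.IsToyDown a L α) (hcons : H.Consistent a)
    {h : H.Node} (hh : H.level h < H.d) {c : H.Node} (hc : c ∈ H.children h) :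
    α c - a c = L c +
      ((α h - a h) - ∑ c' ∈ H.children h, L c') / ((H.children h).card : ℝ) := by
  have := toydown_child ht hh hc
  rw [this, Finset.sum_add_distrib, ← hcons h hh]
  ring_nf

lemma child_sum {a L α W : H.Node → ℝ} (ht : H.IsToyDown a L α) (hcons : H.Consistent a)
    {S : Finset H.Node} (hW : H.IsWeights S W) {h : H.Node} (hh : H.level h < H.d) :
    ∑ c ∈ H.children h, W c * (α c - a c) =
      (∑ c ∈ H.children h, (W c - W h) * L c) + W h * (α h - a h) := by
  have hn : ((H.children h).card : ℝ) ≠ 0 := H.children_card_ne hh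
  set T : ℝ := ∑ c' ∈ H.children h, L c' with hT
  set E : ℝ := α h - a h with hE
  set n : ℝ := ((H.children h).card : ℝ) with hndef
  have hWsum : ∑ c ∈ H.children h, W c = n * W h := by
    rw [hW.2 h hh, ← hndef]; field_simp
  have step1 : ∑ c ∈ H.children h, W c * (α c - a c)
      = ∑ c ∈ H.children h, (W c * L c + W c * ((E - T) / n)) := by
    refine Finset.sum_congr rfl fun c hc => ?_
    rw [err_child ht hcons hh hc, ← hT, ← hE, ← hndef]
    ring
  rw [step1, Finset.sum_add_distrib, ← Finset.sum_mul, hWsum]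
  have h2 : ∑ c ∈ H.children h, (W c - W h) * L c
      = (∑ c ∈ H.children h, W c * L c) - W h * T := by
    rw [hT, Finset.mul_sum, ← Finset.sum_sub_distrib]
    exact Finset.sum_congr rfl fun c _ => by ring
  rw [h2]
  field_simp
  ring

lemma levelSet_succ_eq_biUnion {ℓ : ℕ} (h1 : 1 ≤ ℓ) (h2 : ℓ < H.d) :
    H.levelSet (ℓ + 1) = (H.levelSet ℓ).biUnion H.children := by
  ext c
  simp only [levelSet, Finset.mem_filter, Finset.mem_univ, true_and, Finset.mem_biUnion]
  constructor
  · intro hc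
    have hcr : c ≠ H.root := by
      intro he; rw [he, H.level_root] at hc; omega
    refine ⟨H.parent c, ?_, (H.mem_children).2 ⟨hcr, rfl⟩⟩
    have := H.parent_level c hcr
    omega
  · rintro ⟨b, hb, hcb⟩
    have := H.level_of_mem_children hcb
    omega

lemma children_pairwiseDisjoint (s : Finset H.Node) :
    (s : Set H.Node).PairwiseDisjoint H.children := by
  intro x _ y _ hxy
  refine Finset.disjoint_left.2 fun c hcx hcy => hxy ?_
  rw [H.mem_children] at hcx hcy
  rw [← hcx.2, hcy.2]

lemma level_sum {a L α W : H.Node → ℝ} (ht : H.IsToyDown a L α) (hcons : H.Consistent a)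
    {S : Finset H.Node} (hW : H.IsWeights S W) :
    ∀ ℓ, 1 ≤ ℓ → ℓ ≤ H.d →
    ∑ h ∈ H.levelSet ℓ, W h * (α h - a h) =
      W H.root * L H.root +
      ∑ h ∈ Finset.univ.filter (fun h => h ≠ H.root ∧ H.level h ≤ ℓ),
        (W h - W (H.parent h)) * L h := by
  intro ℓ h1 h2
  induction ℓ with
  | zero => omega
  | succ m ih =>
    rcases Nat.eq_or_lt_of_le h1 with hm | hm
    · -- base case ℓ = 1
      have hls : H.levelSet 1 = {H.root} := by
        ext c
        simp only [levelSet, Finset.mem_filter, Finset.mem_univ, true_and,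
          Finset.mem_singleton]
        constructor
        · exact H.root_unique c
        · intro he; rw [he]; exact H.level_root
      have hfl : Finset.univ.filter (fun h => h ≠ H.root ∧ H.level h ≤ 1) = ∅ := by
        refine Finset.filter_eq_empty_iff.2 fun c _ => ?_
        rintro ⟨hc1, hc2⟩
        exact hc1 (H.root_unique c (by have := H.level_pos c; omega))
      rw [← hm, hls, hfl, Finset.sum_singleton, Finset.sum_empty, add_zero, ht.1]
      ring
    · -- inductive step: m ≥ 1, m + 1 ≤ d
      have hm1 : 1 ≤ m := by omega
      have hmd : m < H.d := by omega
      have ihm := ih hm1 (by omega)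
      rw [levelSet_succ_eq_biUnion hm1 hmd,
        Finset.sum_biUnion (children_pairwiseDisjoint _)]
      have hsplit : ∀ h ∈ H.levelSet m,
          ∑ c ∈ H.children h, W c * (α c - a c) =
          (∑ c ∈ H.children h, (W c - W (H.parent c)) * L c) + W h * (α h - a h) := by
        intro h hh
        have hhd : H.level h < H.d := by
          simp only [levelSet, Finset.mem_filter] at hh; omega
        rw [child_sum ht hcons hW hhd]
        congr 1
        refine Finset.sum_congr rfl fun c hc => ?_
        rw [(H.mem_children.1 hc).2]
      rw [Finset.sum_congr rfl hsplit, Finset.sum_add_distrib, ihm,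
        ← Finset.sum_biUnion (children_pairwiseDisjoint _),
        ← levelSet_succ_eq_biUnion hm1 hmd]
      have hfil : Finset.univ.filter (fun h => h ≠ H.root ∧ H.level h ≤ m + 1) =
          (Finset.univ.filter (fun h => h ≠ H.root ∧ H.level h ≤ m)) ∪ H.levelSet (m+1) := by
        ext c
        simp only [Finset.mem_filter, Finset.mem_union, Finset.mem_univ, true_and, levelSet]
        constructor
        · rintro ⟨hc1, hc2⟩
          rcases Nat.lt_or_ge (H.level c) (m+1) with h | h
          · exact Or.inl ⟨hc1, by omega⟩
          · exact Or.inr (by omega)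
        · rintro (⟨hc1, hc2⟩ | hc)
          · exact ⟨hc1, by omega⟩
          · refine ⟨?_, by omega⟩
            intro he; rw [he, H.level_root] at hc; omega
      have hdisj : Disjoint (Finset.univ.filter (fun h => h ≠ H.root ∧ H.level h ≤ m))
          (H.levelSet (m+1)) := by
        refine Finset.disjoint_left.2 fun c hc1 hc2 => ?_
        simp only [Finset.mem_filter, levelSet, Finset.mem_univ, true_and] at hc1 hc2
        omega
      rw [hfil, Finset.sum_union hdisj]
      ring

/-- Main deterministic identity. -/
lemma district_error_eq {a L α W : H.Node → ℝ} (ht : H.IsToyDown a L α)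
    (hcons : H.Consistent a) {S : Finset H.Node} (hS : S ⊆ H.leaves)
    (hW : H.IsWeights S W) :
    ∑ h ∈ S, (α h - a h) =
      W H.root * L H.root +
      ∑ h ∈ Finset.univ.filter (fun h => h ≠ H.root), (W h - W (H.parent h)) * L h := by
  have hls := level_sum ht hcons hW H.d H.d_pos le_rfl
  have hfil : Finset.univ.filter (fun h => h ≠ H.root ∧ H.level h ≤ H.d) =
      Finset.univ.filter (fun h => h ≠ H.root) := by
    refine Finset.filter_congr fun c _ => ?_
    simp [H.level_le c]
  rw [hfil] at hls
  rw [← hls]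
  rw [show ∑ h ∈ H.levelSet H.d, W h * (α h - a h)
      = ∑ h ∈ H.levelSet H.d, (if h ∈ S then (α h - a h) else 0) from
    Finset.sum_congr rfl fun h hh => by
      rw [hW.1 h (by simpa [Hierarchy.levelSet] using hh)]
      split <;> simp]
  rw [Finset.sum_ite_mem]
  have : H.levelSet H.d ∩ S = S := Finset.inter_eq_right.mpr hS
  rw [this]

end Hierarchy


/-- For a random district `D` independent of the noise, under the equal-split allocation:
`E[E_D | D] = 0` a.s., and `Var(E_D) = (8d²/ε²)·(E[Frag(D)] + E[w_root(D)²])`. -/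
theorem toydown_variance_random_district (H : Hierarchy)
    {Ω : Type} [MeasurableSpace Ω] (μ : MeasureTheory.Measure Ω)
    [MeasureTheory.IsProbabilityMeasure μ]
    (ε : ℝ) (hε : 0 < ε)
    (a : H.Node → ℝ) (hcons : H.Consistent a)
    (L : H.Node → Ω → ℝ)
    (hmeas : ∀ h, Measurable (L h))
    (hL2 : ∀ h, MeasureTheory.MemLp (L h) 2 μ)
    (hindep : iIndepFun L μ)
    (hmean : ∀ h, ∫ ω, L h ω ∂μ = 0)
    (hvar : ∀ h, variance (L h) μ = 8 * (H.d : ℝ) ^ 2 / ε ^ 2)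
    (α : H.Node → Ω → ℝ)
    (hα : ∀ ω, H.IsToyDown a (fun h => L h ω) (fun h => α h ω))
    (D : Ω → Finset H.Node) (hD : ∀ ω, D ω ⊆ H.leaves)
    (hDmeas : @Measurable Ω (Finset H.Node) _ ⊤ D)
    (hDindep : @IndepFun Ω (Finset H.Node) (H.Node → ℝ) _ ⊤ _
      D (fun ω h => L h ω) μ)
    (w : Ω → H.Node → ℝ) (hw : ∀ ω, H.IsWeights (D ω) (w ω)) :
    (μ[(fun ω => ∑ h ∈ D ω, (α h ω - a h)) | MeasurableSpace.comap D ⊤]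
        =ᵐ[μ] fun _ => 0) ∧
      variance (fun ω => ∑ h ∈ D ω, (α h ω - a h)) μ =
        (8 * (H.d : ℝ) ^ 2 / ε ^ 2) *
          ((∫ ω, H.frag (w ω) ∂μ) + ∫ ω, (w ω H.root) ^ 2 ∂μ) := by
  classical
  haveI : Nonempty (Finset H.Node) := ⟨∅⟩
  set σ2 : ℝ := 8 * (H.d : ℝ) ^ 2 / ε ^ 2 with hσ2
  set F : Finset H.Node → H.Node → ℝ :=
    fun S h => if h = H.root then H.wgt S H.root
      else H.wgt S h - H.wgt S (H.parent h) with hF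
  have hwgt : ∀ ω h, w ω h = H.wgt (D ω) h := fun ω => H.isWeights_eq_wgt (hw ω)
  have hroot_filter : Finset.univ.filter (fun h => h = H.root) = {H.root} := by
    ext c; simp
  -- expansion of the district error as a linear combination of the noises
  have hX : ∀ ω, ∑ h ∈ D ω, (α h ω - a h) = ∑ h ∈ Finset.univ, F (D ω) h * L h ω := by
    intro ω
    rw [Hierarchy.district_error_eq (hα ω) hcons (hD ω) (hw ω)]
    rw [← Finset.sum_filter_add_sum_filter_not Finset.univ (fun h => h = H.root)
        (fun h => F (D ω) h * L h ω), hroot_filter, Finset.sum_singleton]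
    congr 1
    · simp [hF, hwgt ω]
    · refine Finset.sum_congr rfl fun c hc => ?_
      simp only [Finset.mem_filter, Finset.mem_univ, true_and] at hc
      simp [hF, hc, hwgt ω]
  -- sum of squared coefficients
  have hsq : ∀ ω, ∑ h ∈ Finset.univ, (F (D ω) h)^2 = H.frag (w ω) + (w ω H.root)^2 := by
    intro ω
    rw [← Finset.sum_filter_add_sum_filter_not Finset.univ (fun h => h = H.root)
        (fun h => (F (D ω) h)^2), hroot_filter, Finset.sum_singleton, add_comm]
    rw [Hierarchy.frag]
    congr 1
    · refine Finset.sum_congr rfl fun c hc => ?_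
      simp only [Finset.mem_filter, Finset.mem_univ, true_and] at hc
      simp [hF, hc, hwgt ω]
    · simp [hF, hwgt ω]
  -- measurability/integrability helpers for functions of D
  have hDg_meas : ∀ g : Finset H.Node → ℝ, Measurable (fun ω => g (D ω)) :=
    fun g => measurable_from_top.comp hDmeas
  have hDg_bdd : ∀ g : Finset H.Node → ℝ, ∃ C, ∀ ω, ‖g (D ω)‖ ≤ C := by
    intro g
    have hne : (Finset.univ.image fun S : Finset H.Node => ‖g S‖).Nonempty :=
      Finset.univ_nonempty.image _
    refine ⟨(Finset.univ.image fun S : Finset H.Node => ‖g S‖).max' hne, ?_⟩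
    intro ω
    exact Finset.le_max' (Finset.univ.image fun S : Finset H.Node => ‖g S‖) ‖g (D ω)‖
      (Finset.mem_image_of_mem _ (Finset.mem_univ _))
  have hDg_int : ∀ g : Finset H.Node → ℝ, Integrable (fun ω => g (D ω)) μ := by
    intro g
    obtain ⟨C, hC⟩ := hDg_bdd g
    exact Integrable.mono' (integrable_const C) (hDg_meas g).aestronglyMeasurable
      (Filter.Eventually.of_forall hC)
  have hLvec : Measurable (fun ω (h : H.Node) => L h ω) :=
    measurable_pi_lambda _ hmeas
  -- the key product formula from the independence of D and the noise vector
  have hkey : ∀ (g : Finset H.Node → ℝ) (φ : (H.Node → ℝ) → ℝ), Measurable φ →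
      ∫ ω, g (D ω) * φ (fun h => L h ω) ∂μ
        = (∫ ω, g (D ω) ∂μ) * ∫ ω, φ (fun h => L h ω) ∂μ := by
    intro g φ hφ
    have hind : IndepFun (fun ω => g (D ω)) (fun ω => φ (fun h => L h ω)) μ :=
      hDindep.comp measurable_from_top hφ
    exact ProbabilityTheory.IndepFun.integral_fun_mul_eq_mul_integral hind (hDg_meas g).aestronglyMeasurable
      (hφ.comp hLvec).aestronglyMeasurable
  have hLint : ∀ h, Integrable (L h) μ := fun h => (hL2 h).integrable one_le_two
  have hterm0 : ∀ (g : Finset H.Node → ℝ) (h : H.Node),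
      ∫ ω, g (D ω) * L h ω ∂μ = 0 := by
    intro g h
    have := hkey g (fun v => v h) (measurable_pi_apply h)
    simp only at this
    rw [this, hmean h, mul_zero]
  have hint1 : ∀ (g : Finset H.Node → ℝ) (h : H.Node),
      Integrable (fun ω => g (D ω) * L h ω) μ := by
    intro g h
    exact (hLint h).bdd_mul (hDg_meas g).aestronglyMeasurable
      (Filter.Eventually.of_forall (hDg_bdd g).choose_spec)
  have hLL : ∀ h k, Integrable (fun ω => L h ω * L k ω) μ := by
    intro h k
    refine Integrable.mono'
      ((((hL2 h).integrable_sq.add (hL2 k).integrable_sq)).div_const 2)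
      ((hmeas h).mul (hmeas k)).aestronglyMeasurable
      (Filter.Eventually.of_forall fun ω => ?_)
    simp only [Pi.add_apply]
    rw [Real.norm_eq_abs, abs_mul]
    nlinarith [sq_nonneg (|L h ω| - |L k ω|), sq_abs (L h ω), sq_abs (L k ω),
      abs_nonneg (L h ω), abs_nonneg (L k ω)]
  have hint2 : ∀ (g : Finset H.Node → ℝ) (h k : H.Node),
      Integrable (fun ω => g (D ω) * (L h ω * L k ω)) μ :=
    fun g h k => (hLL h k).bdd_mul (hDg_meas g).aestronglyMeasurable
      (Filter.Eventually.of_forall (hDg_bdd g).choose_spec)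
  have hL2mom : ∀ h, ∫ ω, L h ω * L h ω ∂μ = σ2 := by
    intro h
    have hv := variance_eq_sub (hL2 h)
    rw [hvar h] at hv
    have h1 : (∫ ω, (L h) ω ∂μ) = 0 := hmean h
    have h2 : μ[(L h) ^ 2] = ∫ ω, L h ω * L h ω ∂μ := by
      refine integral_congr_ae (Filter.Eventually.of_forall fun ω => ?_)
      simp [sq]
    rw [h2, h1] at hv
    norm_num at hv
    linarith
  have hcross : ∀ h k, h ≠ k → ∫ ω, L h ω * L k ω ∂μ = 0 := by
    intro h k hne
    have := ProbabilityTheory.IndepFun.integral_fun_mul_eq_mul_integral (hindep.indepFun hne) (hmeas h).aestronglyMeasurable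
      (hmeas k).aestronglyMeasurable
    rw [this, hmean h, zero_mul]
  -- Memℒp of the district error
  have hu2 : ∀ h : H.Node, MemLp (fun ω => F (D ω) h * L h ω) 2 μ := by
    intro h
    obtain ⟨C, hC⟩ := hDg_bdd (fun S => F S h)
    refine MemLp.of_le_mul (c := C) (hL2 h)
      (((hDg_meas (fun S => F S h)).mul (hmeas h)).aestronglyMeasurable)
      (Filter.Eventually.of_forall fun ω => ?_)
    rw [norm_mul]
    exact mul_le_mul_of_nonneg_right (hC ω) (norm_nonneg _)
  have hXfun : (fun ω => ∑ h ∈ D ω, (α h ω - a h))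
      = fun ω => ∑ h ∈ Finset.univ, F (D ω) h * L h ω := funext hX
  have hXmem : MemLp (fun ω => ∑ h ∈ D ω, (α h ω - a h)) 2 μ := by
    rw [hXfun]
    exact memLp_finsetSum _ fun h _ => hu2 h
  have hXint : Integrable (fun ω => ∑ h ∈ D ω, (α h ω - a h)) μ :=
    hXmem.integrable one_le_two
  have hEX : ∫ ω, (∑ h ∈ D ω, (α h ω - a h)) ∂μ = 0 := by
    rw [hXfun, integral_finset_sum _ (fun h _ => hint1 (fun S => F S h) h)]
    exact Finset.sum_eq_zero fun h _ => hterm0 (fun S => F S h) h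
  constructor
  · -- conditional expectation part
    have hm : MeasurableSpace.comap D ⊤ ≤ _ := hDmeas.comap_le
    refine (ae_eq_condExp_of_forall_setIntegral_eq hm hXint
      (fun s _ _ => integrableOn_zero) ?_
      aestronglyMeasurable_const).symm
    intro s hs _
    obtain ⟨t, -, rfl⟩ := hs
    have hsm : MeasurableSet (D ⁻¹' t) := hm _ ⟨t, trivial, rfl⟩
    have hpt : ∀ ω, (D ⁻¹' t).indicator (fun ω => ∑ h ∈ D ω, (α h ω - a h)) ω
        = ∑ h ∈ Finset.univ,
            (fun S => (if S ∈ t then (1:ℝ) else 0) * F S h) (D ω) * L h ω := by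
      intro ω
      rw [Set.indicator_apply]
      by_cases hω : ω ∈ D ⁻¹' t
      · rw [if_pos hω, hX ω]
        refine Finset.sum_congr rfl fun c _ => ?_
        have hmem : D ω ∈ t := hω
        simp [hmem]
      · rw [if_neg hω]
        symm
        refine Finset.sum_eq_zero fun c _ => ?_
        have hmem : D ω ∉ t := fun hc => hω hc
        simp [hmem]
    have hz : ∫ x in D ⁻¹' t, (∑ h ∈ D x, (α h x - a h)) ∂μ = 0 := by
      rw [← integral_indicator hsm]
      rw [show (D ⁻¹' t).indicator (fun ω => ∑ h ∈ D ω, (α h ω - a h)) = _ from funext hpt]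
      rw [integral_finset_sum _
        (fun h _ => hint1 (fun S => (if S ∈ t then (1:ℝ) else 0) * F S h) h)]
      exact Finset.sum_eq_zero fun h _ =>
        hterm0 (fun S => (if S ∈ t then (1:ℝ) else 0) * F S h) h
    rw [hz]
    simp
  · -- variance part
    rw [variance_eq_sub hXmem, hEX]
    have hXsqfun : (fun ω => ∑ h ∈ D ω, (α h ω - a h)) ^ 2
        = fun ω => ∑ h ∈ Finset.univ, ∑ k ∈ Finset.univ,
            (fun S => F S h * F S k) (D ω) * (L h ω * L k ω) := by
      funext ω
      rw [Pi.pow_apply, hX ω, sq, Finset.sum_mul_sum]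
      exact Finset.sum_congr rfl fun h _ => Finset.sum_congr rfl fun k _ => by ring
    rw [hXsqfun]
    rw [integral_finset_sum _ (fun h _ => integrable_finset_sum _ (fun k _ => hint2 (fun S => F S h * F S k) h k))]
    have hrow : ∀ h : H.Node,
        ∫ ω, (∑ k ∈ Finset.univ, (fun S => F S h * F S k) (D ω) * (L h ω * L k ω)) ∂μ
          = (∫ ω, (F (D ω) h)^2 ∂μ) * σ2 := by
      intro h
      rw [integral_finset_sum _ (fun k _ => hint2 (fun S => F S h * F S k) h k)]
      rw [Finset.sum_eq_single h]
      · have := hkey (fun S => F S h * F S h) (fun v => v h * v h)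
          ((measurable_pi_apply h).mul (measurable_pi_apply h))
        simp only at this
        rw [this, hL2mom h]
        congr 1
        refine integral_congr_ae (Filter.Eventually.of_forall fun ω => ?_)
        simp [sq]
      · intro k _ hk
        have := hkey (fun S => F S h * F S k) (fun v => v h * v k)
          ((measurable_pi_apply h).mul (measurable_pi_apply k))
        simp only at this
        rw [this, hcross h k (Ne.symm hk), mul_zero]
      · intro hh; exact absurd (Finset.mem_univ h) hh
    rw [Finset.sum_congr rfl fun h _ => hrow h]
    rw [← Finset.sum_mul, ← integral_finset_sum _ (fun h _ => hDg_int (fun S => (F S h)^2))]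
    have hfragfun : (fun ω => ∑ h ∈ Finset.univ, (F (D ω) h)^2)
        = fun ω => H.frag (w ω) + (w ω H.root)^2 := funext hsq
    rw [hfragfun]
    have hfragint : Integrable (fun ω => H.frag (w ω)) μ := by
      have : (fun ω => H.frag (w ω))
          = fun ω => (fun S => H.frag (H.wgt S)) (D ω) := by
        funext ω
        simp only [Hierarchy.frag]
        exact Finset.sum_congr rfl fun c _ => by rw [hwgt ω, hwgt ω]
      rw [this]; exact hDg_int (fun S => H.frag (H.wgt S))
    have hrootint : Integrable (fun ω => (w ω H.root)^2) μ := by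
      have : (fun ω => (w ω H.root)^2)
          = fun ω => (fun S => (H.wgt S H.root)^2) (D ω) := by
        funext ω; rw [hwgt ω]
      rw [this]; exact hDg_int (fun S => (H.wgt S H.root)^2)
    rw [integral_add hfragint hrootint]
    ring
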